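/- Let J be an ideal of the polynomial ring C[z_1,...,z_d]. If a polynomial p satisfies p(X_1,...,X_d) = 0 for every n ≥ 1 and every d-tuple (X_1,...,X_d) of pairwise commuting n×n complex matrices such that q(X_1,...,X_d) = 0 for all q ∈ J, then p ∈ J. -/

import Mathlib

open MvPolynomial

private lemma monomial_mem_pow_span_X {d : ℕ} (k : ℕ) (s : Fin d →₀ ℕ)
    (hs : k ≤ s.sum fun _ n => n) :
    (monomial s (1 : ℂ)) ∈
      (Ideal.span (Set.range (X : Fin d → MvPolynomial (Fin d) ℂ))) ^ k := by
  induction k generalizing s with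
  | zero => simp [Ideal.one_eq_top]
  | succ k ih =>
    have hs0 : s ≠ 0 := by
      rintro rfl
      simp [Finsupp.sum_zero_index] at hs
    obtain ⟨i, hi⟩ : ∃ i, s i ≠ 0 := by
      by_contra hc
      push_neg at hc
      exact hs0 (Finsupp.ext fun i => hc i)
    set s' : Fin d →₀ ℕ := s - Finsupp.single i 1 with hs'
    have hsum : Finsupp.single i 1 + s' = s := by
      ext j
      simp only [hs', Finsupp.add_apply, Finsupp.tsub_apply, Finsupp.single_apply]
      by_cases hij : i = j
      · subst hij; simp; omega
      · simp [hij]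
    have hdeg : k ≤ s'.sum fun _ n => n := by
      have h1 : (s.sum fun _ n => n) = ((Finsupp.single i 1 + s').sum fun _ n => n) := by
        rw [hsum]
      rw [Finsupp.sum_add_index' (fun _ => rfl) (fun _ _ _ => rfl)] at h1
      simp [Finsupp.sum_single_index] at h1
      omega
    have hmono : monomial s (1 : ℂ) = monomial s' 1 * X i := by
      rw [← hsum, monomial_single_add, pow_one, mul_comm]
    rw [hmono, pow_succ]
    exact Ideal.mul_mem_mul (ih s' hdeg) (Ideal.subset_span ⟨i, rfl⟩)

private lemma finite_quotient_pow_span_X (d k : ℕ) :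
    Module.Finite ℂ
      (MvPolynomial (Fin d) ℂ ⧸
        (Ideal.span (Set.range (X : Fin d → MvPolynomial (Fin d) ℂ))) ^ k) := by
  set I : Ideal (MvPolynomial (Fin d) ℂ) :=
    (Ideal.span (Set.range (X : Fin d → MvPolynomial (Fin d) ℂ))) ^ k with hI
  set S : Set (Fin d →₀ ℕ) := {s | (s.sum fun _ n => n) < k} with hS
  have hSfin : S.Finite := by
    have : S ⊆ Set.Iic (Finsupp.equivFunOnFinite.symm fun _ => k) := by
      intro s hs
      intro j
      simp only [Finsupp.equivFunOnFinite_symm_apply_apply]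
      have : s j ≤ s.sum fun _ n => n := by
        by_cases h0 : s j = 0
        · omega
        · exact Finset.single_le_sum (f := fun a => s a) (fun _ _ => Nat.zero_le _)
            (Finsupp.mem_support_iff.mpr h0)
      have := hs.out
      omega
    exact (Set.finite_Iic _).subset this
  have hspan : Submodule.span ℂ
      (Ideal.Quotient.mk I '' ((fun s => monomial s (1 : ℂ)) '' S)) = ⊤ := by
    rw [eq_top_iff]
    have htop : Submodule.span ℂ
        (Ideal.Quotient.mk I '' (Set.range fun s : Fin d →₀ ℕ => monomial s (1 : ℂ))) = ⊤ := by
      have h1 : Submodule.span ℂ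
          (Set.range fun s : Fin d →₀ ℕ => monomial s (1 : ℂ)) = ⊤ := by
        have := (basisMonomials (Fin d) ℂ).span_eq
        rwa [coe_basisMonomials] at this
      have h2 := congrArg (Submodule.map (Ideal.Quotient.mkₐ ℂ I).toLinearMap) h1
      have h3 : LinearMap.range (Ideal.Quotient.mkₐ ℂ I).toLinearMap = ⊤ :=
        LinearMap.range_eq_top.mpr (Ideal.Quotient.mkₐ_surjective ℂ I)
      have hco : ⇑(Ideal.Quotient.mkₐ ℂ I).toLinearMap = ⇑(Ideal.Quotient.mk I) := rfl
      rwa [Submodule.map_span, Submodule.map_top, h3, hco] at h2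
    rw [← htop]
    apply Submodule.span_le.mpr
    rintro _ ⟨_, ⟨s, rfl⟩, rfl⟩
    by_cases hs : (s.sum fun _ n => n) < k
    · exact Submodule.subset_span ⟨monomial s 1, ⟨s, hs, rfl⟩, rfl⟩
    · have hz : Ideal.Quotient.mk I (monomial s 1) = 0 := by
        rw [Ideal.Quotient.eq_zero_iff_mem]
        exact monomial_mem_pow_span_X k s (by omega)
      rw [hz]
      exact Submodule.zero_mem _
  rw [Module.finite_def]
  exact Submodule.fg_def.mpr ⟨_, (hSfin.image _).image _, hspan⟩

private noncomputable def shiftEquiv (d : ℕ) (a : Fin d → ℂ) :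
    MvPolynomial (Fin d) ℂ ≃ₐ[ℂ] MvPolynomial (Fin d) ℂ :=
  AlgEquiv.ofAlgHom (aeval fun i => X i - C (a i)) (aeval fun i => X i + C (a i))
    (by ext i : 2 <;> simp) (by ext i : 2 <;> simp)

private lemma finite_quotient_pow_span (d k : ℕ) (a : Fin d → ℂ) :
    Module.Finite ℂ
      (MvPolynomial (Fin d) ℂ ⧸
        (Ideal.span (Set.range fun i => (X i : MvPolynomial (Fin d) ℂ) - C (a i))) ^ k) := by
  set I0 : Ideal (MvPolynomial (Fin d) ℂ) :=
    Ideal.span (Set.range (X : Fin d → MvPolynomial (Fin d) ℂ))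
  set I1 : Ideal (MvPolynomial (Fin d) ℂ) :=
    Ideal.span (Set.range fun i => (X i : MvPolynomial (Fin d) ℂ) - C (a i))
  have hmap : I1 ^ k = (I0 ^ k).map (shiftEquiv d a : MvPolynomial (Fin d) ℂ →+* _) := by
    rw [Ideal.map_pow]
    congr 1
    rw [Ideal.map_span, ← Set.range_comp]
    have hc : (⇑(shiftEquiv d a : MvPolynomial (Fin d) ℂ →+* MvPolynomial (Fin d) ℂ) ∘ X)
        = fun i => (X i : MvPolynomial (Fin d) ℂ) - C (a i) := by
      funext i
      show (aeval fun j => (X j : MvPolynomial (Fin d) ℂ) - C (a j)) (X i) = _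
      simp
    rw [hc]
  have e := Ideal.quotientEquivAlg (R₁ := ℂ) (I0 ^ k) (I1 ^ k) (shiftEquiv d a) hmap
  have := finite_quotient_pow_span_X d k
  exact Module.Finite.equiv e.toLinearEquiv

/-- **Commutative free Nullstellensatz.** If a polynomial `p` over `ℂ` vanishes under every
evaluation at a `d`-tuple of pairwise commuting `n × n` complex matrices (over all `n ≥ 1`)
that annihilates the ideal `J` (equivalently, under every unital `ℂ`-algebra homomorphism
into matrices killing `J`), then `p ∈ J`. -/
theorem commutative_free_nullstellensatz (d : ℕ) (J : Ideal (MvPolynomial (Fin d) ℂ))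
    (p : MvPolynomial (Fin d) ℂ)
    (h : ∀ (n : ℕ), 0 < n → ∀ X : Fin d → Matrix (Fin n) (Fin n) ℂ,
      (∀ i j, Commute (X i) (X j)) →
      ∀ φ : MvPolynomial (Fin d) ℂ →ₐ[ℂ] Matrix (Fin n) (Fin n) ℂ,
        (∀ i, φ (MvPolynomial.X i) = X i) →
        (∀ q ∈ J, φ q = 0) → φ p = 0) :
    p ∈ J := by
  by_contra hp
  -- choose I maximal among ideals containing J and not containing p
  obtain ⟨I, ⟨hJI, hpI⟩, hImax⟩ :
      ∃ I ∈ {I : Ideal (MvPolynomial (Fin d) ℂ) | J ≤ I ∧ p ∉ I}, ∀ I' ∈ {I : Ideal (MvPolynomial (Fin d) ℂ) | J ≤ I ∧ p ∉ I}, ¬I < I' := by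
    exact set_has_maximal_iff_noetherian.mpr inferInstance
      {I : Ideal (MvPolynomial (Fin d) ℂ) | J ≤ I ∧ p ∉ I} ⟨J, ⟨le_refl J, hp⟩⟩
  have hIne : I ≠ ⊤ := fun hI => hpI (hI ▸ Submodule.mem_top)
  -- maximality: any strictly bigger ideal contains p
  have hIbig : ∀ I' : Ideal (MvPolynomial (Fin d) ℂ), I < I' → p ∈ I' := by
    intro I' hlt
    by_contra hpI'
    exact hImax I' ⟨le_trans hJI hlt.le, hpI'⟩ hlt
  -- the colon ideal m = (I : p) is maximal
  set m : Ideal (MvPolynomial (Fin d) ℂ) := I.colon (Ideal.span {p}) with hm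
  have hmem_m : ∀ x : MvPolynomial (Fin d) ℂ, x ∈ m ↔ x * p ∈ I := by
    intro x
    rw [hm, Ideal.mem_colon_span_singleton]
  have hIm : I ≤ m := fun x hx => (hmem_m x).mpr (Ideal.mul_mem_right p I hx)
  have hmmax : m.IsMaximal := by
    rw [Ideal.isMaximal_iff]
    constructor
    · intro h1
      exact hpI (by simpa using (hmem_m 1).mp h1)
    · intro K x hmK hxm hxK
      -- x * p ∉ I, so I + span {x * p} > I, hence contains p
      have hxpI : x * p ∉ I := fun hc => hxm ((hmem_m x).mpr hc)
      have hlt : I < I ⊔ Ideal.span {x * p} := lt_of_le_of_ne le_sup_left (by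
        intro heq
        exact hxpI (heq ▸ (le_sup_right : Ideal.span {x * p} ≤ I ⊔ Ideal.span {x * p})
          (Ideal.subset_span rfl)))
      obtain ⟨i, hi, z, hz, hizp⟩ := Submodule.mem_sup.mp (hIbig _ hlt)
      obtain ⟨c, rfl⟩ := Ideal.mem_span_singleton'.mp hz
      -- p = i + c * (x * p), so (1 - c * x) * p = i ∈ I, so 1 - c * x ∈ m ≤ K
      have h1cx : 1 - c * x ∈ m := by
        rw [hmem_m]
        have h5 : (1 - c * x) * p = i := by linear_combination -hizp
        rw [h5]; exact hi
      have : (1 : MvPolynomial (Fin d) ℂ) = (1 - c * x) + c * x := by ring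
      rw [this]
      exact K.add_mem (hmK h1cx) (K.mul_mem_left c hxK)
  -- m is contained in the radical of I
  have hmrad : m ≤ I.radical := by
    intro x hx
    by_contra hxrad
    have hxn : ∀ n : ℕ, x ^ n ∉ I := by
      intro n hn
      exact hxrad ⟨n, hn⟩
    -- the chain (I : x^n) stabilizes
    set f : ℕ →o Ideal (MvPolynomial (Fin d) ℂ) := ⟨fun n => I.colon (Ideal.span {x ^ n}), by
      intro n n' hnn y hy
      rw [Ideal.mem_colon_span_singleton] at hy ⊢
      obtain ⟨c, rfl⟩ := Nat.exists_eq_add_of_le hnn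
      rw [pow_add, ← mul_assoc]
      exact Ideal.mul_mem_right _ I hy⟩ with hf
    obtain ⟨n, hn⟩ := monotone_stabilizes_iff_noetherian.mpr inferInstance f
    -- p ∈ I + span {x ^ n}
    have hlt : I < I ⊔ Ideal.span {x ^ n} := lt_of_le_of_ne le_sup_left (by
      intro heq
      exact hxn n (heq ▸ (le_sup_right : Ideal.span {x ^ n} ≤ _) (Ideal.subset_span rfl)))
    obtain ⟨i, hi, z, hz, hizp⟩ := Submodule.mem_sup.mp (hIbig _ hlt)
    obtain ⟨c, rfl⟩ := Ideal.mem_span_singleton'.mp hz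
    -- x * p ∈ I gives x * i + c * x^(n+1) ∈ I, so c * x^(n+1) ∈ I
    have hxpI : x * p ∈ I := (hmem_m x).mp hx
    have hcx : c * x ^ (n + 1) ∈ I := by
      have h1 : x * p = x * i + c * x ^ (n + 1) := by rw [← hizp]; ring
      have h2 : c * x ^ (n + 1) = x * p - x * i := by rw [h1]; ring
      rw [h2]
      exact I.sub_mem hxpI (I.mul_mem_left x hi)
    have hc1 : c ∈ f (n + 1) := by
      show c ∈ I.colon (Ideal.span {x ^ (n + 1)})
      rw [Ideal.mem_colon_span_singleton]
      exact hcx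
    rw [← hn (n + 1) (Nat.le_succ n)] at hc1
    have hcxn : c * x ^ n ∈ I := by
      have h6 : c ∈ Submodule.colon I (Ideal.span {x ^ n}) := hc1
      rw [Ideal.mem_colon_span_singleton] at h6
      exact h6
    exact hpI (by rw [← hizp]; exact I.add_mem hi hcxn)
  -- hence the radical of I equals m, and some power of m lies in I
  have hradtop : I.radical ≠ ⊤ := fun hc => hIne (Ideal.radical_eq_top.mp hc)
  have hrad : m = I.radical := hmmax.eq_of_le hradtop hmrad
  obtain ⟨k, hk⟩ := Ideal.exists_radical_pow_le_of_fg I (IsNoetherian.noetherian _)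
  have hmkI : m ^ k ≤ I := hrad ▸ hk
  -- by the Nullstellensatz, m is the vanishing ideal of a point a
  obtain ⟨a, ha⟩ := (MvPolynomial.isMaximal_iff_eq_vanishingIdeal_singleton (I := m)).mp hmmax
  -- the span of the X i - C (a i) is contained in m
  set N : Ideal (MvPolynomial (Fin d) ℂ) := Ideal.span (Set.range fun i => (X i : MvPolynomial (Fin d) ℂ) - C (a i)) with hN
  have hNm : N ≤ m := by
    rw [hN, Ideal.span_le]
    rintro _ ⟨i, rfl⟩
    rw [ha, SetLike.mem_coe, MvPolynomial.mem_vanishingIdeal_singleton_iff]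
    simp
  have hNI : N ^ k ≤ I := le_trans (Ideal.pow_right_mono hNm k) hmkI
  -- the quotient MvPolynomial (Fin d) ℂ ⧸ I is finite dimensional over ℂ
  have hfinN : Module.Finite ℂ (MvPolynomial (Fin d) ℂ ⧸ N ^ k) := finite_quotient_pow_span d k a
  set g : (MvPolynomial (Fin d) ℂ ⧸ N ^ k) →ₐ[ℂ] (MvPolynomial (Fin d) ℂ ⧸ I) :=
    Ideal.Quotient.liftₐ (N ^ k) (Ideal.Quotient.mkₐ ℂ I)
      (fun x hx => Ideal.Quotient.eq_zero_iff_mem.mpr (hNI hx)) with hg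
  have hgsurj : Function.Surjective g := by
    intro y
    obtain ⟨x, rfl⟩ := Ideal.Quotient.mkₐ_surjective ℂ I y
    exact ⟨Ideal.Quotient.mk (N ^ k) x, rfl⟩
  have hfin : Module.Finite ℂ (MvPolynomial (Fin d) ℂ ⧸ I) := Module.Finite.of_surjective g.toLinearMap hgsurj
  -- now build the representation on B = MvPolynomial (Fin d) ℂ ⧸ I
  set B := MvPolynomial (Fin d) ℂ ⧸ I
  have : Nontrivial B := Ideal.Quotient.nontrivial_iff.mpr hIne
  set n := Module.finrank ℂ B with hn
  have hnpos : 0 < n := Module.finrank_pos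
  set b := Module.finBasis ℂ B
  set φ : MvPolynomial (Fin d) ℂ →ₐ[ℂ] Matrix (Fin n) (Fin n) ℂ :=
    ((LinearMap.toMatrixAlgEquiv b).toAlgHom.comp (Algebra.lmul ℂ B)).comp
      (Ideal.Quotient.mkₐ ℂ I) with hφ
  have hcomm : ∀ i j, Commute (φ (X i)) (φ (X j)) := fun i j =>
    (Commute.all (X i : MvPolynomial (Fin d) ℂ) (X j)).map φ
  have hkill : ∀ q ∈ J, φ q = 0 := by
    intro q hq
    have : Ideal.Quotient.mkₐ ℂ I q = 0 := Ideal.Quotient.eq_zero_iff_mem.mpr (hJI hq)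
    simp [hφ, AlgHom.comp_apply, this]
  have hzero := h n hnpos (fun i => φ (X i)) hcomm φ (fun _ => rfl) hkill
  -- but φ p ≠ 0 since left multiplication by the nonzero class of p is nonzero
  have hmkp : Ideal.Quotient.mkₐ ℂ I p ≠ 0 := by
    intro hc
    exact hpI (Ideal.Quotient.eq_zero_iff_mem.mp hc)
  apply hmkp
  have h1 : Algebra.lmul ℂ B (Ideal.Quotient.mkₐ ℂ I p) = 0 := by
    have := hzero
    rw [hφ, AlgHom.comp_apply, AlgHom.comp_apply] at this
    exact (LinearMap.toMatrixAlgEquiv b).injective (by rw [map_zero]; exact this)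
  have := congrArg (fun f : Module.End ℂ B => f 1) h1
  simpa using this
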